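/- arXiv:0708.1259 — 2 statements merged into one kernel-verified Lean document; each statement's English description precedes it below -/
import Mathlib

section
/- In ℚ[[x]], the identity ∑_{d≥1} ((1/d)∑_{k|d} μ(d/k) m^k) x^d = ∑_{l≥1} (μ(l)/l) log(1/(1 - m x^l)) holds for any integer m ≥ 1, i.e., the generating function of necklace numbers equals -∑_{l≥1}(μ(l)/l) log(1 - m x^l). -/
open PowerSeries

/-- Formal power series logarithm of a series f with constant term 1:
`log f = ∑_{k≥1} (-1)^{k+1} (f-1)^k / k`, written coefficientwise (the coefficient of x^n
only involves k ≤ n since f - 1 has zero constant term). -/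
noncomputable def pLog (f : PowerSeries ℚ) : PowerSeries ℚ :=
  PowerSeries.mk fun n =>
    ∑ k ∈ Finset.Icc 1 n, (-1 : ℚ) ^ (k + 1) * (k : ℚ)⁻¹ * PowerSeries.coeff (R := ℚ) n ((f - 1) ^ k)

/-- The geometric series `1/(1 - m x^l) = ∑_{j≥0} m^j x^{jl}` in ℚ[[x]]. -/
noncomputable def geomSeries (m l : ℕ) : PowerSeries ℚ :=
  PowerSeries.mk fun n => if l ∣ n then (m : ℚ) ^ (n / l) else 0

/-- Substitution x ↦ x^l. -/
noncomputable def stretch (l : ℕ) (f : PowerSeries ℚ) : PowerSeries ℚ :=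
  PowerSeries.mk fun n => if l ∣ n then PowerSeries.coeff (R := ℚ) (n / l) f else 0

lemma coeff_stretch (l : ℕ) (f : PowerSeries ℚ) (n : ℕ) :
    PowerSeries.coeff (R := ℚ) n (stretch l f) =
      if l ∣ n then PowerSeries.coeff (R := ℚ) (n / l) f else 0 :=
  PowerSeries.coeff_mk _ _

lemma coeff_geom (m l n : ℕ) :
    PowerSeries.coeff (R := ℚ) n (geomSeries m l) = if l ∣ n then (m : ℚ) ^ (n / l) else 0 :=
  PowerSeries.coeff_mk _ _

lemma stretch_one (l : ℕ) (hl : l ≠ 0) : stretch l 1 = 1 := by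
  ext n
  rw [coeff_stretch]
  rcases eq_or_ne n 0 with rfl | hn
  · simp
  · have : ¬ (l ∣ n ∧ n / l = 0) := by
      rintro ⟨⟨c, rfl⟩, h2⟩
      rw [Nat.mul_div_cancel_left _ (Nat.pos_of_ne_zero hl)] at h2
      subst h2; simp at hn
    split_ifs with h
    · rw [PowerSeries.coeff_one, PowerSeries.coeff_one, if_neg hn, if_neg]
      exact fun hh => this ⟨h, hh⟩
    · rw [PowerSeries.coeff_one, if_neg hn]

lemma sum_stretch_aux {l j : ℕ} (hl : l ≠ 0) (F : ℕ → ℚ) (hF : ∀ p, ¬ l ∣ p → F p = 0) :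
    ∑ p ∈ Finset.range (l * j + 1), F p = ∑ a ∈ Finset.range (j + 1), F (l * a) := by
  rw [show (∑ a ∈ Finset.range (j + 1), F (l * a))
      = ∑ p ∈ (Finset.range (j + 1)).image (fun a => l * a), F p from
    (Finset.sum_image fun x _ y _ h =>
      Nat.eq_of_mul_eq_mul_left (Nat.pos_of_ne_zero hl) h).symm]
  apply (Finset.sum_subset ?_ ?_).symm
  · intro p hp
    simp only [Finset.mem_image, Finset.mem_range] at hp ⊢
    obtain ⟨a, ha, rfl⟩ := hp
    have := Nat.mul_le_mul_left l (Nat.lt_succ_iff.mp ha)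
    omega
  · intro p hp hnp
    apply hF
    rintro ⟨c, rfl⟩
    apply hnp
    simp only [Finset.mem_image, Finset.mem_range] at hp ⊢
    exact ⟨c, by nlinarith [Nat.pos_of_ne_zero hl], rfl⟩

lemma stretch_mul {l : ℕ} (hl : l ≠ 0) (f g : PowerSeries ℚ) :
    stretch l (f * g) = stretch l f * stretch l g := by
  ext n
  conv_rhs => rw [PowerSeries.coeff_mul, Finset.Nat.sum_antidiagonal_eq_sum_range_succ_mk]
  rw [coeff_stretch]
  simp_rw [coeff_stretch]
  by_cases h : l ∣ n
  · obtain ⟨j, rfl⟩ := h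
    rw [if_pos ⟨j, rfl⟩, Nat.mul_div_cancel_left _ (Nat.pos_of_ne_zero hl),
      PowerSeries.coeff_mul, Finset.Nat.sum_antidiagonal_eq_sum_range_succ_mk,
      sum_stretch_aux hl _ (fun p hp => by rw [if_neg hp, zero_mul])]
    apply Finset.sum_congr rfl
    intro a ha
    have ha' : a ≤ j := Nat.lt_succ_iff.mp (Finset.mem_range.mp ha)
    have h1 : l ∣ l * a := ⟨a, rfl⟩
    have h2 : l * j - l * a = l * (j - a) := by
      rw [Nat.mul_sub]
    rw [if_pos h1, h2, if_pos ⟨j - a, rfl⟩, Nat.mul_div_cancel_left _ (Nat.pos_of_ne_zero hl),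
      Nat.mul_div_cancel_left _ (Nat.pos_of_ne_zero hl)]
  · rw [if_neg h]
    apply (Finset.sum_eq_zero ?_).symm
    intro p hpmem
    by_cases hp : l ∣ p
    · have hpn : p ≤ n := Nat.lt_succ_iff.mp (Finset.mem_range.mp hpmem)
      have : ¬ l ∣ n - p := fun hq => h (by
        have := Nat.dvd_add hp hq
        rwa [Nat.add_sub_cancel' hpn] at this)
      rw [if_neg this, mul_zero]
    · rw [if_neg hp, zero_mul]

lemma stretch_pow {l : ℕ} (hl : l ≠ 0) (f : PowerSeries ℚ) (k : ℕ) :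
    stretch l (f ^ k) = (stretch l f) ^ k := by
  induction k with
  | zero => rw [pow_zero, pow_zero, stretch_one l hl]
  | succ k ih => rw [pow_succ, pow_succ, stretch_mul hl, ih]

lemma stretch_sub (l : ℕ) (f g : PowerSeries ℚ) :
    stretch l (f - g) = stretch l f - stretch l g := by
  ext n
  simp only [map_sub, coeff_stretch]
  split_ifs with h <;> simp

lemma stretch_sub_one {l : ℕ} (hl : l ≠ 0) (f : PowerSeries ℚ) :
    stretch l (f - 1) = stretch l f - 1 := by
  rw [stretch_sub, stretch_one l hl]

lemma geom_eq_stretch (m l : ℕ) : geomSeries m l = stretch l (geomSeries m 1) := by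
  ext n
  rw [coeff_geom, coeff_stretch]
  split_ifs with h
  · rw [coeff_geom, if_pos (one_dvd _), Nat.div_one]
  · rfl

lemma geom_one_eq (m : ℕ) : geomSeries m 1 = rescale (m : ℚ) (PowerSeries.mk 1) := by
  ext n
  rw [coeff_geom, rescale_mk, PowerSeries.coeff_mk, if_pos (one_dvd _), Nat.div_one,
    Pi.one_apply, mul_one]

lemma geom_one_sub_one (m : ℕ) :
    geomSeries m 1 - 1 = (PowerSeries.C (R := ℚ) m * geomSeries m 1) * PowerSeries.X := by
  ext n
  cases n with
  | zero =>
      simp only [map_sub, coeff_geom, if_pos (one_dvd 0), Nat.zero_div, pow_zero,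
        PowerSeries.coeff_zero_eq_constantCoeff, map_mul, constantCoeff_X, mul_zero,
        map_one, sub_self]
  | succ n =>
      rw [PowerSeries.coeff_succ_mul_X, map_sub, PowerSeries.coeff_one, if_neg (Nat.succ_ne_zero n),
        sub_zero, PowerSeries.coeff_C_mul, coeff_geom, coeff_geom, if_pos (one_dvd _),
        if_pos (one_dvd _), Nat.div_one, Nat.div_one, pow_succ]
      ring

lemma coeff_geom_one_sub_one_pow (m j k : ℕ) (hk : k ≠ 0) :
    PowerSeries.coeff (R := ℚ) j ((geomSeries m 1 - 1) ^ k) =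
      if k ≤ j then (m : ℚ) ^ j * ((j - 1).choose (k - 1)) else 0 := by
  obtain ⟨d, rfl⟩ : ∃ d, k = d + 1 := ⟨k - 1, by omega⟩
  rw [geom_one_sub_one, mul_pow, PowerSeries.coeff_mul_X_pow', mul_pow, ← map_pow,
    geom_one_eq, ← map_pow, mk_one_pow_eq_mk_choose_add, rescale_mk]
  split_ifs with h
  · rw [PowerSeries.coeff_C_mul, PowerSeries.coeff_mk]
    have h1 : d + (j - (d + 1)) = j - 1 := by omega
    rw [h1, ← mul_assoc, ← pow_add]
    congr 2
    omega
  · rfl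

lemma alt_sum_choose (j : ℕ) (hj : j ≠ 0) :
    ∑ k ∈ Finset.Icc 1 j,
        (-1 : ℚ) ^ (k + 1) * (k : ℚ)⁻¹ * (((j - 1).choose (k - 1) : ℕ) : ℚ)
      = (j : ℚ)⁻¹ := by
  have key : ∀ k ∈ Finset.Icc 1 j,
      (-1 : ℚ) ^ (k + 1) * (k : ℚ)⁻¹ * (((j - 1).choose (k - 1) : ℕ) : ℚ)
        = (j : ℚ)⁻¹ * ((-1 : ℚ) ^ (k + 1) * ((j.choose k : ℕ) : ℚ)) := by
    intro k hk
    obtain ⟨hk1, hkj⟩ := Finset.mem_Icc.mp hk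
    have hnat : j * (j - 1).choose (k - 1) = j.choose k * k := by
      have h := Nat.add_one_mul_choose_eq (j - 1) (k - 1)
      have h1 : j - 1 + 1 = j := by omega
      have h2 : k - 1 + 1 = k := by omega
      rw [h1, h2] at h
      exact h
    have hq : (j : ℚ) * (((j - 1).choose (k - 1) : ℕ) : ℚ) = ((j.choose k : ℕ) : ℚ) * k := by
      exact_mod_cast congrArg (fun x : ℕ => (x : ℚ)) hnat
    have hk0 : (k : ℚ) ≠ 0 := Nat.cast_ne_zero.mpr (by omega)
    have hj0 : (j : ℚ) ≠ 0 := Nat.cast_ne_zero.mpr hj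
    field_simp
    linear_combination hq
  rw [Finset.sum_congr rfl key, ← Finset.mul_sum]
  have hsum : ∑ k ∈ Finset.Icc 1 j, (-1 : ℚ) ^ (k + 1) * ((j.choose k : ℕ) : ℚ) = 1 := by
    have h0 := Int.alternating_sum_range_choose_of_ne hj
    have hq : ∑ i ∈ Finset.range (j + 1), (-1 : ℚ) ^ i * ((j.choose i : ℕ) : ℚ) = 0 := by
      exact_mod_cast congrArg (fun x : ℤ => (x : ℚ)) h0
    have hins : Finset.range (j + 1) = insert 0 (Finset.Icc 1 j) := by
      ext x
      simp only [Finset.mem_range, Finset.mem_insert, Finset.mem_Icc]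
      omega
    rw [hins, Finset.sum_insert (by simp)] at hq
    simp only [pow_zero, Nat.choose_zero_right, Nat.cast_one, one_mul] at hq
    have hneg : ∀ k, (-1 : ℚ) ^ (k + 1) * ((j.choose k : ℕ) : ℚ)
        = -((-1 : ℚ) ^ k * ((j.choose k : ℕ) : ℚ)) := fun k => by ring
    simp_rw [hneg, Finset.sum_neg_distrib]
    linarith
  rw [hsum, mul_one]

lemma coeff_pLog_geom (m l n : ℕ) (hl : l ≠ 0) (hn : n ≠ 0) (hln : l ∣ n) :
    PowerSeries.coeff (R := ℚ) n (pLog (geomSeries m l))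
      = (m : ℚ) ^ (n / l) * (((n / l : ℕ) : ℚ))⁻¹ := by
  obtain ⟨j, rfl⟩ := hln
  have hj : j ≠ 0 := by rintro rfl; simp at hn
  have hdiv : l * j / l = j := Nat.mul_div_cancel_left _ (Nat.pos_of_ne_zero hl)
  have hco : ∀ k, k ≠ 0 → PowerSeries.coeff (R := ℚ) (l * j) ((geomSeries m l - 1) ^ k)
      = if k ≤ j then (m : ℚ) ^ j * (((j - 1).choose (k - 1) : ℕ) : ℚ) else 0 := by
    intro k hk
    rw [geom_eq_stretch, ← stretch_sub_one hl, ← stretch_pow hl, coeff_stretch,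
      if_pos ⟨j, rfl⟩, hdiv, coeff_geom_one_sub_one_pow m j k hk]
  have hsub : Finset.Icc 1 j ⊆ Finset.Icc 1 (l * j) :=
    Finset.Icc_subset_Icc_right (Nat.le_mul_of_pos_left _ (Nat.pos_of_ne_zero hl))
  rw [pLog, PowerSeries.coeff_mk, hdiv]
  calc (∑ k ∈ Finset.Icc 1 (l * j), (-1 : ℚ) ^ (k + 1) * (k : ℚ)⁻¹ *
          PowerSeries.coeff (R := ℚ) (l * j) ((geomSeries m l - 1) ^ k))
      = ∑ k ∈ Finset.Icc 1 j, (-1 : ℚ) ^ (k + 1) * (k : ℚ)⁻¹ *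
          PowerSeries.coeff (R := ℚ) (l * j) ((geomSeries m l - 1) ^ k) := by
        refine (Finset.sum_subset hsub ?_).symm
        intro k hk hnk
        simp only [Finset.mem_Icc] at hk hnk
        rw [hco k (by omega), if_neg (by omega), mul_zero]
    _ = ∑ k ∈ Finset.Icc 1 j, (m : ℚ) ^ j *
          ((-1 : ℚ) ^ (k + 1) * (k : ℚ)⁻¹ * (((j - 1).choose (k - 1) : ℕ) : ℚ)) := by
        refine Finset.sum_congr rfl fun k hk => ?_
        obtain ⟨hk1, hkj⟩ := Finset.mem_Icc.mp hk
        rw [hco k (by omega), if_pos hkj]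
        ring
    _ = (m : ℚ) ^ j * ((j : ℚ))⁻¹ := by
        rw [← Finset.mul_sum, alt_sum_choose j hj]

/-- In ℚ[[x]], for m ≥ 1,
`∑_{d≥1} ((1/d)∑_{k|d} μ(d/k) m^k) x^d = ∑_{l≥1} (μ(l)/l) log(1/(1 - m x^l))`
(the sum over l on the right contributes to the coefficient of x^n only for l | n). -/
theorem necklace_generating_function (m : ℕ) (hm : 1 ≤ m) :
    (PowerSeries.mk fun d =>
        if d = 0 then 0 else
          ((1 : ℚ) / d) * ∑ k ∈ d.divisors, (ArithmeticFunction.moebius (d / k) : ℚ) * (m : ℚ) ^ k)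
    = PowerSeries.mk (fun n =>
        ∑ l ∈ n.divisors,
          ((ArithmeticFunction.moebius l : ℚ) / l) * PowerSeries.coeff (R := ℚ) n (pLog (geomSeries m l))) := by
  ext n
  rw [PowerSeries.coeff_mk, PowerSeries.coeff_mk]
  rcases eq_or_ne n 0 with rfl | hn
  · simp
  · rw [if_neg hn]
    have hstep : ∀ l ∈ n.divisors,
        ((ArithmeticFunction.moebius l : ℚ) / l) * PowerSeries.coeff (R := ℚ) n (pLog (geomSeries m l))
          = ((1 : ℚ) / n) * ((ArithmeticFunction.moebius l : ℚ) * (m : ℚ) ^ (n / l)) := by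
      intro l hl
      obtain ⟨hld, hn0⟩ := Nat.mem_divisors.mp hl
      have hl0 : l ≠ 0 := by rintro rfl; exact hn0 (Nat.eq_zero_of_zero_dvd hld)
      have hnl0 : n / l ≠ 0 := fun h => hn (by rw [← Nat.div_mul_cancel hld, h, zero_mul])
      have hmul : (l : ℚ) * ((n / l : ℕ) : ℚ) = (n : ℚ) := by
        rw [← Nat.cast_mul, Nat.mul_div_cancel' hld]
      rw [coeff_pLog_geom m l n hl0 hn hld, ← hmul]
      have hl0' : (l : ℚ) ≠ 0 := Nat.cast_ne_zero.mpr hl0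
      have hnl0' : ((n / l : ℕ) : ℚ) ≠ 0 := Nat.cast_ne_zero.mpr hnl0
      field_simp
    rw [Finset.sum_congr rfl hstep, ← Finset.mul_sum]
    congr 1
    rw [← Nat.sum_div_divisors n (fun d => (ArithmeticFunction.moebius d : ℚ) * (m : ℚ) ^ (n / d))]
    refine Finset.sum_congr rfl fun k hk => ?_
    rw [Nat.div_div_self (Nat.mem_divisors.mp hk).1 hn]
end

section
/- For a quiver with no oriented cycles, with vertices ordered so that the Ringel matrix R (R_{ij} = δ_{ij} - #{arrows i→j}) is upper triangular with 1's on the diagonal, for every nonzero dimension vector α ∈ ℕ^I the product of q-binomial coefficients [−Rα, α] := ∏_{i∈I} [(−Rα)^i, α^i] vanishes in ℚ(q). -/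
/-- The q-binomial type coefficient `[n,m] = (∏_{i=1}^m (1-q^{n+i}))/(∏_{i=1}^m (1-q^i))`
in ℚ(q), for n ∈ ℤ, m ∈ ℕ. -/
noncomputable def qBinom (n : ℤ) (m : ℕ) : RatFunc ℚ :=
  (∏ i ∈ Finset.Icc 1 m, (1 - (RatFunc.X : RatFunc ℚ) ^ (n + (i : ℤ)))) /
    (∏ i ∈ Finset.Icc 1 m, (1 - (RatFunc.X : RatFunc ℚ) ^ (i : ℤ)))

/-- For a quiver with no oriented cycles whose vertices `Fin r` are ordered so
that the arrow-count matrix `c` satisfies `c i j = 0` unless `i < j` (hence the Ringel matrix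
`R i j = δ_ij - c i j` is upper triangular with ones on the diagonal), for every nonzero
dimension vector α the product `[−Rα, α] = ∏_i [(−Rα)_i, α_i]` of q-binomial coefficients
vanishes in ℚ(q). -/
theorem prod_qBinom_neg_Ringel_eq_zero (r : ℕ) (c : Fin r → Fin r → ℕ)
    (hc : ∀ i j : Fin r, ¬ i < j → c i j = 0)
    (R : Fin r → Fin r → ℤ) (hR : ∀ i j, R i j = (if i = j then 1 else 0) - c i j)
    (α : Fin r → ℕ) (hα : α ≠ 0) :
    ∏ i : Fin r, qBinom (-(∑ j : Fin r, R i j * (α j : ℤ))) (α i) = 0 := by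
  -- pick the largest index with α i ≠ 0
  have hne : (Finset.univ.filter fun i => α i ≠ 0).Nonempty := by
    rcases Function.ne_iff.mp hα with ⟨i, hi⟩
    exact ⟨i, by simpa using hi⟩
  set s := Finset.univ.filter fun i => α i ≠ 0
  set i₀ := s.max' hne with hi₀
  have hαi₀ : α i₀ ≠ 0 := by
    have := s.max'_mem hne
    simpa [s] using this
  have hmax : ∀ j : Fin r, i₀ < j → α j = 0 := by
    intro j hj
    by_contra h
    have : j ∈ s := by simp [s, h]
    exact absurd (s.le_max' j this) (not_le.mpr hj)
  -- the sum equals α i₀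
  have hsum : ∑ j : Fin r, R i₀ j * (α j : ℤ) = (α i₀ : ℤ) := by
    rw [Finset.sum_eq_single i₀]
    · simp [hR, hc i₀ i₀ (lt_irrefl _)]
    · intro j _ hj
      rcases lt_trichotomy i₀ j with h | h | h
      · simp [hmax j h]
      · exact absurd h.symm hj
      · have hc' : c i₀ j = 0 := hc i₀ j (not_lt.mpr h.le)
        simp [hR, hc', hj.symm]
    · simp
  apply Finset.prod_eq_zero (Finset.mem_univ i₀)
  rw [hsum]
  unfold qBinom
  rw [Finset.prod_eq_zero (Finset.mem_Icc.mpr ⟨Nat.one_le_iff_ne_zero.mpr hαi₀, le_refl _⟩)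
    (by simp), zero_div]
end
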